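/- Let k be a field and G a finite abelian group. On the negative part of the Tate cochain complex, define m̂₂'((g₁,…,g_s), (h₁,…,h_t)) = ∑_{g∈G} (h₁,…,h_t, g^{-1}g_s^{-1}⋯g₁^{-1}, g₁,…,g_s) ∈ k[(G∖{1})^{s+t+1}] (with the convention that any tuple with an entry equal to 1 is zero). Then for α ∈ k[(G∖{1})^s], β ∈ k[(G∖{1})^t], γ ∈ k[(G∖{1})^u], associativity holds up to sign: m̂₂'(m̂₂'(α,β),γ) = ± m̂₂'(α, m̂₂'(β,γ)). -/

import Mathlib

/-- Normalization: a tuple containing the identity element of `G` as an entry is set to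
zero in `k[(G∖{1})^s]`. -/
noncomputable def tupleNrm (k : Type*) [Field k] {G : Type*} [Group G] [DecidableEq G]
    {s : ℕ} (t : Fin s → G) : (Fin s → G) →₀ k :=
  if ∃ i, t i = 1 then 0 else Finsupp.single t 1

/-- The product on the negative part of the Tate cochain complex of an abelian group:
`m̂₂'((g₁,…,g_s),(h₁,…,h_t)) = ∑_{g∈G} (h₁,…,h_t, g⁻¹g_s⁻¹⋯g₁⁻¹, g₁,…,g_s)`,
extended bilinearly, with any tuple containing `1` set to zero. -/
noncomputable def cupNeg (k : Type*) [Field k] (G : Type*) [CommGroup G] [Fintype G]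
    [DecidableEq G] (s t : ℕ) (α : (Fin s → G) →₀ k) (β : (Fin t → G) →₀ k) :
    (Fin (t + 1 + s) → G) →₀ k :=
  α.sum fun gs a => β.sum fun hs b =>
    (a * b) • ∑ g : G,
      tupleNrm k (Fin.append (Fin.append hs (fun _ : Fin 1 => g⁻¹ * (∏ i, gs i)⁻¹)) gs)

section Aux
set_option linter.unusedSectionVars false
variable {k : Type*} [Field k] {G : Type*} [CommGroup G] [Fintype G] [DecidableEq G]

lemma tupleNrm_eq_zero {n : ℕ} {T : Fin n → G} (h : ∃ i, T i = 1) : tupleNrm k T = 0 :=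
  if_pos h

lemma sum_smul_tupleNrm {n m : ℕ} (T : Fin n → G) (x : k)
    (F : (Fin n → G) → k → ((Fin m → G) →₀ k))
    (h0 : F T 0 = 0) (h1 : (∃ i, T i = 1) → F T x = 0) :
    (x • tupleNrm k T).sum F = F T x := by
  unfold tupleNrm
  split_ifs with h
  · rw [smul_zero, Finsupp.sum_zero_index, h1 h]
  · rw [Finsupp.smul_single, smul_eq_mul, mul_one, Finsupp.sum_single_index h0]

lemma prod_fin_append {m n : ℕ} (a : Fin m → G) (b : Fin n → G) :
    ∏ i, Fin.append a b i = (∏ i, a i) * ∏ i, b i := by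
  rw [Fin.prod_univ_add]
  simp [Fin.append_left, Fin.append_right]

lemma cupNeg_zero_left (s t : ℕ) (β : (Fin t → G) →₀ k) :
    cupNeg k G s t 0 β = 0 := Finsupp.sum_zero_index

lemma cupNeg_zero_right (s t : ℕ) (α : (Fin s → G) →₀ k) :
    cupNeg k G s t α 0 = 0 := by
  unfold cupNeg
  simp [Finsupp.sum_zero_index]

lemma cupNeg_add_left (s t : ℕ) (α₁ α₂ : (Fin s → G) →₀ k) (β : (Fin t → G) →₀ k) :
    cupNeg k G s t (α₁ + α₂) β = cupNeg k G s t α₁ β + cupNeg k G s t α₂ β := by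
  unfold cupNeg
  refine Finsupp.sum_add_index' (fun gs => ?_) (fun gs a₁ a₂ => ?_)
  · simp
  · rw [← Finsupp.sum_add]
    refine Finsupp.sum_congr fun hs _ => ?_
    rw [add_mul, add_smul]

lemma cupNeg_add_right (s t : ℕ) (α : (Fin s → G) →₀ k) (β₁ β₂ : (Fin t → G) →₀ k) :
    cupNeg k G s t α (β₁ + β₂) = cupNeg k G s t α β₁ + cupNeg k G s t α β₂ := by
  unfold cupNeg
  rw [← Finsupp.sum_add]
  refine Finsupp.sum_congr fun gs _ => ?_
  refine Finsupp.sum_add_index' (fun hs => ?_) (fun hs b₁ b₂ => ?_)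
  · simp
  · rw [mul_add, add_smul]

lemma cupNeg_single_single (s t : ℕ) (gs : Fin s → G) (hs : Fin t → G) (a b : k) :
    cupNeg k G s t (Finsupp.single gs a) (Finsupp.single hs b) =
      ∑ g : G, (a * b) •
        tupleNrm k (Fin.append (Fin.append hs (fun _ : Fin 1 => g⁻¹ * (∏ i, gs i)⁻¹)) gs) := by
  unfold cupNeg
  rw [Finsupp.sum_single_index, Finsupp.sum_single_index, Finset.smul_sum]
  · simp
  · rw [Finsupp.sum_single_index] <;> simp

/-- evaluation of cupNeg with a single on the right -/
lemma cupNeg_eval_single_right (n u : ℕ) (A : (Fin n → G) →₀ k) (ks : Fin u → G) (c : k) :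
    cupNeg k G n u A (Finsupp.single ks c) =
      A.sum fun w x => (x * c) • ∑ g' : G,
        tupleNrm k (Fin.append (Fin.append ks (fun _ : Fin 1 => g'⁻¹ * (∏ i, w i)⁻¹)) w) := by
  unfold cupNeg
  refine Finsupp.sum_congr fun w _ => ?_
  rw [Finsupp.sum_single_index]
  simp

/-- evaluation of cupNeg with a single on the left -/
lemma cupNeg_eval_single_left (s n : ℕ) (gs : Fin s → G) (a : k) (B : (Fin n → G) →₀ k) :
    cupNeg k G s n (Finsupp.single gs a) B =
      B.sum fun v b => (a * b) • ∑ g : G,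
        tupleNrm k (Fin.append (Fin.append v (fun _ : Fin 1 => g⁻¹ * (∏ i, gs i)⁻¹)) gs) := by
  unfold cupNeg
  rw [Finsupp.sum_single_index (by simp)]

end Aux
section Aux2
set_option linter.unusedSectionVars false
variable {k : Type*} [Field k] {G : Type*} [CommGroup G] [Fintype G] [DecidableEq G]

lemma compose_left (s t u : ℕ) (gs : Fin s → G) (hs : Fin t → G) (ks : Fin u → G) (a b c : k) :
    cupNeg k G (t + 1 + s) u
        (cupNeg k G s t (Finsupp.single gs a) (Finsupp.single hs b)) (Finsupp.single ks c) =
      ∑ g : G, ∑ g' : G, (a * b * c) •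
        tupleNrm k (Fin.append (Fin.append ks (fun _ : Fin 1 => g'⁻¹ *
          (∏ i, (Fin.append (Fin.append hs (fun _ : Fin 1 => g⁻¹ * (∏ i, gs i)⁻¹)) gs) i)⁻¹))
          (Fin.append (Fin.append hs (fun _ : Fin 1 => g⁻¹ * (∏ i, gs i)⁻¹)) gs)) := by
  rw [cupNeg_single_single, cupNeg_eval_single_right,
    ← Finsupp.sum_finset_sum_index (fun w => by simp) (fun w x₁ x₂ => by rw [add_mul, add_smul])]
  refine Finset.sum_congr rfl fun g _ => ?_
  rw [sum_smul_tupleNrm _ _ _ (by simp)]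
  · rw [mul_assoc, ← mul_assoc, Finset.smul_sum]
  · rintro ⟨i, hi⟩
    rw [Finset.smul_sum]
    refine Finset.sum_eq_zero fun g' _ => ?_
    rw [tupleNrm_eq_zero ⟨Fin.natAdd (u + 1) i, by rw [Fin.append_right]; exact hi⟩, smul_zero]

lemma compose_right (s t u : ℕ) (gs : Fin s → G) (hs : Fin t → G) (ks : Fin u → G) (a b c : k) :
    cupNeg k G s (u + 1 + t) (Finsupp.single gs a)
        (cupNeg k G t u (Finsupp.single hs b) (Finsupp.single ks c)) =
      ∑ g₂ : G, ∑ g : G, (a * (b * c)) •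
        tupleNrm k (Fin.append (Fin.append
          (Fin.append (Fin.append ks (fun _ : Fin 1 => g₂⁻¹ * (∏ i, hs i)⁻¹)) hs)
          (fun _ : Fin 1 => g⁻¹ * (∏ i, gs i)⁻¹)) gs) := by
  rw [cupNeg_single_single, cupNeg_eval_single_left,
    ← Finsupp.sum_finset_sum_index (fun w => by simp) (fun w x₁ x₂ => by rw [mul_add, add_smul])]
  refine Finset.sum_congr rfl fun g₂ _ => ?_
  rw [sum_smul_tupleNrm _ _ _ (by simp)]
  · rw [Finset.smul_sum]
  · rintro ⟨i, hi⟩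
    rw [Finset.smul_sum]
    refine Finset.sum_eq_zero fun g _ => ?_
    refine mul_comm (b*c) a ▸ ?_
    rw [tupleNrm_eq_zero ⟨Fin.castAdd s (Fin.castAdd 1 i), by
      rw [Fin.append_left, Fin.append_left]; exact hi⟩, smul_zero]

end Aux2
section
set_option linter.unusedSectionVars false
variable {G : Type*} [CommGroup G]

lemma big_append (u t s : ℕ) (ks : Fin u → G) (m₂ : Fin 1 → G) (hs : Fin t → G)
    (m : Fin 1 → G) (gs : Fin s → G) (h : u + 1 + (t + 1 + s) = u + 1 + t + 1 + s) :
    (Fin.append (Fin.append (Fin.append (Fin.append ks m₂) hs) m) gs) ∘ (Fin.cast h) =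
      Fin.append (Fin.append ks m₂) (Fin.append (Fin.append hs m) gs) := by
  funext i
  rcases i with ⟨i, hi⟩
  simp only [Function.comp_apply, Fin.append, Fin.addCases, Fin.cast_mk, Fin.castLT,
    Fin.subNat, Fin.castAdd, Fin.castLE, Fin.natAdd, eq_rec_constant]
  split_ifs <;> first
    | rfl
    | omega
    | (refine congrArg _ (Fin.ext ?_); simp; omega)
end

section
set_option linter.unusedSectionVars false
variable {k : Type*} [Field k] {G : Type*} [CommGroup G] [DecidableEq G]

lemma arrowCongr_finCongr_apply {n m : ℕ} (h : n = m) (T : Fin n → G) :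
    (Equiv.arrowCongr (finCongr h) (Equiv.refl G)) T = T ∘ Fin.cast h.symm := by
  funext i
  simp [Equiv.arrowCongr]

lemma equivMapDomain_tupleNrm {n m : ℕ} (h : n = m) (T : Fin n → G) :
    Finsupp.equivMapDomain (Equiv.arrowCongr (finCongr h) (Equiv.refl G)) (tupleNrm k T) =
      tupleNrm k (T ∘ Fin.cast h.symm) := by
  unfold tupleNrm
  split_ifs with h1 h2 h2
  · exact Finsupp.equivMapDomain_zero
  · exact absurd ⟨Fin.cast h h1.choose, by simpa using h1.choose_spec⟩ h2
  · exact absurd ⟨Fin.cast h.symm h2.choose, h2.choose_spec⟩ h1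
  · rw [Finsupp.equivMapDomain_single, arrowCongr_finCongr_apply]
end

section Aux3
set_option linter.unusedSectionVars false
variable {k : Type*} [Field k] {G : Type*} [CommGroup G] [Fintype G] [DecidableEq G]

lemma equivMapDomain_sum {α β ι : Type*} (f : α ≃ β) (s : Finset ι) (g : ι → α →₀ k) :
    Finsupp.equivMapDomain f (∑ i ∈ s, g i) = ∑ i ∈ s, Finsupp.equivMapDomain f (g i) := by
  ext b
  simp [Finsupp.equivMapDomain_apply, Finset.sum_apply']

lemma equivMapDomain_add {α β : Type*} (f : α ≃ β) (g₁ g₂ : α →₀ k) :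
    Finsupp.equivMapDomain f (g₁ + g₂) =
      Finsupp.equivMapDomain f g₁ + Finsupp.equivMapDomain f g₂ := by
  ext b
  simp [Finsupp.equivMapDomain_apply]

lemma equivMapDomain_smul {α β : Type*} (f : α ≃ β) (c : k) (g : α →₀ k) :
    Finsupp.equivMapDomain f (c • g) = c • Finsupp.equivMapDomain f g := by
  ext b
  simp [Finsupp.equivMapDomain_apply]

lemma key (s t u : ℕ) (gs : Fin s → G) (hs : Fin t → G) (ks : Fin u → G) (a b c : k)
    (h : (u + 1 + t) + 1 + s = u + 1 + (t + 1 + s)) :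
    cupNeg k G (t + 1 + s) u
        (cupNeg k G s t (Finsupp.single gs a) (Finsupp.single hs b)) (Finsupp.single ks c) =
      Finsupp.equivMapDomain (Equiv.arrowCongr (finCongr h) (Equiv.refl G))
        (cupNeg k G s (u + 1 + t) (Finsupp.single gs a)
          (cupNeg k G t u (Finsupp.single hs b) (Finsupp.single ks c))) := by
  rw [compose_left, compose_right, equivMapDomain_sum]
  simp_rw [equivMapDomain_sum, equivMapDomain_smul, equivMapDomain_tupleNrm, big_append]
  conv_rhs => rw [Finset.sum_comm]
  refine Finset.sum_congr rfl fun g _ => ?_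
  refine Fintype.sum_equiv (Equiv.mulLeft g⁻¹) _ _ fun g' => ?_
  rw [← mul_assoc]
  have : (fun _ : Fin 1 => g'⁻¹ *
      (∏ i, (Fin.append (Fin.append hs (fun _ : Fin 1 => g⁻¹ * (∏ i, gs i)⁻¹)) gs) i)⁻¹) =
      (fun _ : Fin 1 => ((Equiv.mulLeft g⁻¹) g')⁻¹ * (∏ i, hs i)⁻¹) := by
    funext _
    rw [prod_fin_append, prod_fin_append]
    simp only [Equiv.coe_mulLeft, Fin.prod_univ_one, mul_inv_rev, inv_inv]
    group
  rw [this]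

end Aux3


/-- For a finite abelian group `G`, the product `m̂₂'` on the negative
part of the Tate cochain complex is associative up to a sign depending only on the
degrees: `m̂₂'(m̂₂'(α,β),γ) = ± m̂₂'(α,m̂₂'(β,γ))` for `α ∈ k[(G∖{1})^s]`,
`β ∈ k[(G∖{1})^t]`, `γ ∈ k[(G∖{1})^u]`. -/
theorem stmt19 (k : Type*) [Field k] (G : Type*) [CommGroup G] [Fintype G]
    [DecidableEq G] (s t u : ℕ) :
    ∃ ε : k, (ε = 1 ∨ ε = -1) ∧
      ∀ (α : (Fin s → G) →₀ k) (β : (Fin t → G) →₀ k) (γ : (Fin u → G) →₀ k),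
        (∀ v ∈ α.support, ∀ i, v i ≠ 1) →
        (∀ v ∈ β.support, ∀ i, v i ≠ 1) →
        (∀ v ∈ γ.support, ∀ i, v i ≠ 1) →
        cupNeg k G (t + 1 + s) u (cupNeg k G s t α β) γ =
          ε • Finsupp.equivMapDomain
            (Equiv.arrowCongr
              (finCongr (by omega : (u + 1 + t) + 1 + s = u + 1 + (t + 1 + s)))
              (Equiv.refl G))
            (cupNeg k G s (u + 1 + t) α (cupNeg k G t u β γ)) := by
  refine ⟨1, Or.inl rfl, fun α β γ hα hβ hγ => ?_⟩
  clear hα hβ hγ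
  rw [one_smul]
  induction α using Finsupp.induction_linear with
  | zero => rw [cupNeg_zero_left, cupNeg_zero_left, cupNeg_zero_left, Finsupp.equivMapDomain_zero]
  | add α₁ α₂ h₁ h₂ =>
      simp only [cupNeg_add_left, equivMapDomain_add, h₁, h₂]
  | single gs a =>
      induction β using Finsupp.induction_linear with
      | zero =>
          rw [cupNeg_zero_right, cupNeg_zero_left, cupNeg_zero_left, cupNeg_zero_right,
            Finsupp.equivMapDomain_zero]
      | add β₁ β₂ h₁ h₂ =>
          simp only [cupNeg_add_right, cupNeg_add_left, equivMapDomain_add, h₁, h₂]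
      | single hs b =>
          induction γ using Finsupp.induction_linear with
          | zero =>
              rw [cupNeg_zero_right, cupNeg_zero_right, cupNeg_zero_right,
                Finsupp.equivMapDomain_zero]
          | add γ₁ γ₂ h₁ h₂ =>
              simp only [cupNeg_add_right, equivMapDomain_add, h₁, h₂]
          | single ks c => exact key s t u gs hs ks a b c (by omega)
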